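/- Define W_ℓ(n) := min { q ∈ ℕ : n · ∑_{i=0}^{ℓ} C(q,i) ≤ 2^q }. Then for all natural numbers ℓ ≥ 1 and n ≥ 2, W_ℓ(n) ≥ log₂ n + ℓ·log₂(log₂(2n)) − ℓ·log₂ ℓ. -/

import Mathlib

open Finset Real

/-- The integer weight (Hamming) bound. -/
noncomputable def weightBound (ℓ n : ℕ) : ℕ :=
  sInf {q : ℕ | n * ∑ i ∈ Finset.range (ℓ + 1), q.choose i ≤ 2 ^ q}

private lemma wb_prod_kfac (k : ℕ) : ∏ j ∈ Finset.range k, (k - j) = k.factorial := by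
  rw [← Finset.prod_range_add_one_eq_factorial, ← Finset.prod_range_reflect]
  exact Finset.prod_congr rfl fun j hj => by
    simp only [Finset.mem_range] at hj; omega

private lemma wb_pow_mul_factorial_le (n k : ℕ) (h : k ≤ n) :
    n ^ k * k.factorial ≤ n.descFactorial k * k ^ k := by
  have h1 : n ^ k * k.factorial = ∏ i ∈ Finset.range k, (n * (k - i)) := by
    rw [Finset.prod_mul_distrib, Finset.prod_const, Finset.card_range, wb_prod_kfac]
  have h2 : n.descFactorial k * k ^ k = ∏ i ∈ Finset.range k, ((n - i) * k) := by
    rw [Finset.prod_mul_distrib, Finset.prod_const, Finset.card_range,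
      Nat.descFactorial_eq_prod_range]
  rw [h1, h2]
  refine Finset.prod_le_prod' fun i hi => ?_
  simp only [Finset.mem_range] at hi
  have hik : i ≤ k := hi.le
  have hin : i ≤ n := hik.trans h
  zify [hik, hin]
  nlinarith [mul_le_mul_of_nonneg_left (show (k : ℤ) ≤ n by exact_mod_cast h)
    (show (0 : ℤ) ≤ i by positivity)]

private lemma wb_pow_le_choose_mul (n k : ℕ) (h : k ≤ n) :
    n ^ k ≤ n.choose k * k ^ k := by
  have h0 := wb_pow_mul_factorial_le n k h
  rw [Nat.descFactorial_eq_factorial_mul_choose] at h0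
  have hk : 0 < k.factorial := k.factorial_pos
  refine Nat.le_of_mul_le_mul_left ?_ hk
  calc k.factorial * n ^ k = n ^ k * k.factorial := mul_comm _ _
    _ ≤ k.factorial * n.choose k * k ^ k := h0
    _ = k.factorial * (n.choose k * k ^ k) := by ring

private lemma wb_nonempty (ℓ n : ℕ) (hℓ : 1 ≤ ℓ) (hn : 2 ≤ n) :
    {q : ℕ | n * ∑ i ∈ Finset.range (ℓ + 1), q.choose i ≤ 2 ^ q}.Nonempty := by
  obtain ⟨m, hm⟩ : ∃ m : ℕ, m = n + ℓ ^ 2 + 2 * ℓ + 1 := ⟨_, rfl⟩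
  refine ⟨2 * ℓ * m, ?_⟩
  obtain ⟨q, hq⟩ : ∃ q : ℕ, q = 2 * ℓ * m := ⟨_, rfl⟩
  rw [← hq]
  show n * ∑ i ∈ Finset.range (ℓ + 1), q.choose i ≤ 2 ^ q
  have hq1 : 1 ≤ q := by
    have h1 : 1 * 1 * 1 ≤ 2 * ℓ * m := by
      refine Nat.mul_le_mul (Nat.mul_le_mul (by omega) hℓ) (by omega)
    omega
  have hsum : ∑ i ∈ Finset.range (ℓ + 1), q.choose i ≤ (ℓ + 1) * q ^ ℓ := by
    calc ∑ i ∈ Finset.range (ℓ + 1), q.choose i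
        ≤ ∑ i ∈ Finset.range (ℓ + 1), q ^ ℓ := by
          refine Finset.sum_le_sum fun i hi => ?_
          simp only [Finset.mem_range] at hi
          exact (Nat.choose_le_pow q i).trans (Nat.pow_le_pow_right hq1 (by omega))
      _ = (ℓ + 1) * q ^ ℓ := by simp [mul_comm]
  have hqpow : q ≤ 2 ^ (1 + ℓ + m) := by
    calc q = 2 * ℓ * m := hq
      _ ≤ 2 * 2 ^ ℓ * 2 ^ m :=
        Nat.mul_le_mul (Nat.mul_le_mul_left 2 (Nat.lt_two_pow_self (n := ℓ)).le) (Nat.lt_two_pow_self (n := m)).le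
      _ = 2 ^ (1 + ℓ + m) := by rw [pow_add, pow_add, pow_one]
  have key : n * ((ℓ + 1) * q ^ ℓ) ≤ 2 ^ q := by
    calc n * ((ℓ + 1) * q ^ ℓ)
        ≤ 2 ^ n * (2 ^ ℓ * (2 ^ (1 + ℓ + m)) ^ ℓ) := by
          refine Nat.mul_le_mul (Nat.lt_two_pow_self (n := n)).le (Nat.mul_le_mul ?_ ?_)
          · exact Nat.lt_two_pow_self (n := ℓ)
          · exact Nat.pow_le_pow_left hqpow ℓ
      _ = 2 ^ (n + (ℓ + (1 + ℓ + m) * ℓ)) := by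
          rw [← pow_mul, ← pow_add, ← pow_add]
      _ ≤ 2 ^ q := by
          refine Nat.pow_le_pow_right (by norm_num) ?_
          have hℓm : n + 2 * ℓ + ℓ ^ 2 + 1 ≤ ℓ * m := by
            calc n + 2 * ℓ + ℓ ^ 2 + 1 = 1 * m := by rw [hm]; ring
              _ ≤ ℓ * m := Nat.mul_le_mul_right m hℓ
          rw [hq]
          nlinarith
  exact le_trans (Nat.mul_le_mul_left n hsum) key

theorem weightBound_lower (ℓ n : ℕ) (hℓ : 1 ≤ ℓ) (hn : 2 ≤ n) :
    Real.logb 2 n + (ℓ : ℝ) * Real.logb 2 (Real.logb 2 (2 * n)) -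
        (ℓ : ℝ) * Real.logb 2 ℓ ≤ (weightBound ℓ n : ℝ) := by
  have hne := wb_nonempty ℓ n hℓ hn
  set q : ℕ := weightBound ℓ n with hqdef
  have hmem : n * ∑ i ∈ Finset.range (ℓ + 1), q.choose i ≤ 2 ^ q := Nat.sInf_mem hne
  have hb : (1 : ℝ) < 2 := one_lt_two
  -- n ≤ 2 ^ q
  have hn2q : n ≤ 2 ^ q := by
    have h0 : q.choose 0 ≤ ∑ i ∈ Finset.range (ℓ + 1), q.choose i :=
      Finset.single_le_sum (f := fun i => q.choose i) (fun i _ => Nat.zero_le _)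
        (Finset.mem_range.mpr (by omega))
    have := Nat.mul_le_mul_left n h0
    simpa using this.trans hmem
  have hq1 : 1 ≤ q := by
    rcases Nat.eq_zero_or_pos q with h | h
    · rw [h] at hn2q; omega
    · exact h
  -- 2 * n ≤ 2 ^ q
  have h2n2q : 2 * n ≤ 2 ^ q := by
    have hsub : ∑ i ∈ Finset.range 2, q.choose i ≤ ∑ i ∈ Finset.range (ℓ + 1), q.choose i :=
      Finset.sum_le_sum_of_subset (Finset.range_subset_range.mpr (by omega))
    have h01 : ∑ i ∈ Finset.range 2, q.choose i = 1 + q := by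
      simp [Finset.sum_range_succ]
    have h1q : n * (1 + q) ≤ 2 ^ q := by
      rw [← h01]; exact (Nat.mul_le_mul_left n hsub).trans hmem
    calc 2 * n = n * 2 := mul_comm _ _
      _ ≤ n * (1 + q) := Nat.mul_le_mul_left n (by omega)
      _ ≤ 2 ^ q := h1q
  have h2n2qR : (2 : ℝ) * n ≤ 2 ^ q := by exact_mod_cast h2n2q
  have hn2qR : (n : ℝ) ≤ 2 ^ q := by exact_mod_cast hn2q
  have hnR : (2 : ℝ) ≤ n := by exact_mod_cast hn
  have h2npos : (0 : ℝ) < 2 * n := by linarith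
  have hlogb2pow : Real.logb 2 ((2 : ℝ) ^ q) = q := by
    rw [Real.logb_pow, Real.logb_self_eq_one (by norm_num : (1:ℝ) < 2), mul_one]
  have hLq : Real.logb 2 (2 * (n : ℝ)) ≤ q := by
    calc Real.logb 2 (2 * (n : ℝ)) ≤ Real.logb 2 ((2 : ℝ) ^ q) :=
          Real.logb_le_logb_of_le hb h2npos h2n2qR
      _ = q := hlogb2pow
  have hlognq : Real.logb 2 (n : ℝ) ≤ q := by
    calc Real.logb 2 (n : ℝ) ≤ Real.logb 2 ((2 : ℝ) ^ q) :=
          Real.logb_le_logb_of_le hb (by linarith) hn2qR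
      _ = q := hlogb2pow
  have hL : (0 : ℝ) < Real.logb 2 (2 * n) := Real.logb_pos hb (by linarith)
  have hℓR : (1 : ℝ) ≤ ℓ := by exact_mod_cast hℓ
  by_cases hcase : ℓ ≤ q
  · -- main case: use (q/ℓ)^ℓ ≤ choose q ℓ
    have hchoose : (n : ℝ) * (q.choose ℓ) ≤ 2 ^ q := by
      have h0 : q.choose ℓ ≤ ∑ i ∈ Finset.range (ℓ + 1), q.choose i :=
        Finset.single_le_sum (f := fun i => q.choose i) (fun i _ => Nat.zero_le _)
          (Finset.mem_range.mpr (by omega))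
      exact_mod_cast (Nat.mul_le_mul_left n h0).trans hmem
    have hℓpos : (0 : ℝ) < ℓ := by linarith
    have hpow : ((q : ℝ) / ℓ) ^ ℓ ≤ q.choose ℓ := by
      rw [div_pow, div_le_iff₀ (by positivity)]
      exact_mod_cast wb_pow_le_choose_mul q ℓ hcase
    have hchain : (n : ℝ) * (Real.logb 2 (2 * n) / ℓ) ^ ℓ ≤ 2 ^ q := by
      calc (n : ℝ) * (Real.logb 2 (2 * n) / ℓ) ^ ℓ
          ≤ (n : ℝ) * ((q : ℝ) / ℓ) ^ ℓ := by
            refine mul_le_mul_of_nonneg_left ?_ (by positivity)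
            refine pow_le_pow_left₀ (div_nonneg hL.le hℓpos.le) ?_ ℓ
            exact (div_le_div_iff_of_pos_right hℓpos).mpr hLq
        _ ≤ (n : ℝ) * (q.choose ℓ) := mul_le_mul_of_nonneg_left hpow (by positivity)
        _ ≤ 2 ^ q := hchoose
    have hxpos : (0 : ℝ) < (n : ℝ) * (Real.logb 2 (2 * n) / ℓ) ^ ℓ := by positivity
    have hlog := Real.logb_le_logb_of_le hb hxpos hchain
    rw [hlogb2pow, Real.logb_mul (by positivity) (by positivity), Real.logb_pow,
      Real.logb_div (ne_of_gt hL) (ne_of_gt hℓpos)] at hlog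
    linarith
  · -- degenerate case: ℓ > q, the log term is nonpositive
    push_neg at hcase
    have hqℓR : (q : ℝ) ≤ ℓ := by exact_mod_cast hcase.le
    have h6 : Real.logb 2 (Real.logb 2 (2 * n)) ≤ Real.logb 2 (ℓ : ℝ) :=
      Real.logb_le_logb_of_le hb hL (hLq.trans hqℓR)
    have h7 := mul_le_mul_of_nonneg_left h6 (by positivity : (0 : ℝ) ≤ (ℓ : ℝ))
    push_cast
    linarith
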